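/- Let F_q be a finite field of characteristic p, let n be a prime number different from p, and let d be the multiplicative order of q modulo n. Then the number of polynomials g ∈ F_q[X] of degree strictly less than n whose image in F_q[X]/(Q_n) is a unit equals q·(q^d − 1)^{(n−1)/d}; equivalently, the quota of such polynomials among all q^n polynomials of degree < n equals (1 − q^{−d})^{(n−1)/d}. -/

import Mathlib

open Polynomial

/-- Units of a product of monoids are products of units. -/
def myPiUnits {ι : Type*} {M : ι → Type*} [∀ i, Monoid (M i)] :
    (∀ i, M i)ˣ ≃* ∀ i, (M i)ˣ where
  toFun u i := ⟨u.val i, u.inv i, congrFun u.val_inv i, congrFun u.inv_val i⟩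
  invFun f := ⟨fun i => (f i : M i), fun i => ((f i)⁻¹ : (M i)ˣ),
    funext fun i => (f i).val_inv, funext fun i => (f i).inv_val⟩
  left_inv u := Units.ext rfl
  right_inv f := funext fun i => Units.ext rfl
  map_mul' u v := funext fun i => Units.ext rfl

/-- Every monic irreducible factor of `Q_n` has degree `d`. -/
lemma factor_natDegree {F : Type*} [Field F] [Fintype F] (p n d : ℕ) [Fact p.Prime]
    [CharP F p] (hn : n.Prime) (hnp : n ≠ p) (hd : 0 < d)
    (hdq : Fintype.card F ^ d ≡ 1 [MOD n])
    (hmin : ∀ e : ℕ, 0 < e → Fintype.card F ^ e ≡ 1 [MOD n] → d ≤ e)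
    {f : F[X]} (hf : Irreducible f) (hdvd : f ∣ ∑ i ∈ Finset.range n, X ^ i) :
    f.natDegree = d := by
  classical
  have hq1 : 1 < Fintype.card F := Fintype.one_lt_card
  have hpn : ¬ p ∣ n := by
    intro h
    exact hnp (((Nat.prime_dvd_prime_iff_eq Fact.out hn).mp h).symm)
  haveI := Fact.mk hf
  set K := AdjoinRoot f with hK
  haveI : Fintype K := Module.fintypeOfFintype (AdjoinRoot.powerBasis hf.ne_zero).basis
  haveI : CharP K p := charP_of_injective_algebraMap (algebraMap F K).injective p
  have cardK : Fintype.card K = Fintype.card F ^ f.natDegree := by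
    rw [Module.card_fintype (AdjoinRoot.powerBasis hf.ne_zero).basis, Fintype.card_fin]
    rfl
  set α := AdjoinRoot.root f with hα
  have hsum : ∑ i ∈ Finset.range n, α ^ i = 0 := by
    have h1 : (aeval α) (∑ i ∈ Finset.range n, (X : F[X]) ^ i) = 0 := by
      rw [AdjoinRoot.aeval_eq, AdjoinRoot.mk_eq_zero.mpr hdvd]
    simpa [map_sum] using h1
  have hαn : α ^ n = 1 := by
    have h := geom_sum_mul α n
    rw [hsum, zero_mul] at h
    exact sub_eq_zero.mp h.symm
  have hα1 : α ≠ 1 := by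
    intro h1
    rw [h1] at hsum
    simp only [one_pow, Finset.sum_const, Finset.card_range, nsmul_eq_mul, mul_one] at hsum
    exact hpn ((CharP.cast_eq_zero_iff K p n).mp hsum)
  have hord : orderOf α = n := by
    rcases hn.eq_one_or_self_of_dvd _ (orderOf_dvd_of_pow_eq_one hαn) with h | h
    · exact absurd (orderOf_eq_one_iff.mp h) hα1
    · exact h
  have hu : IsUnit α := IsUnit.of_pow_eq_one hαn hn.pos.ne'
  have hdvdcard : n ∣ Fintype.card Kˣ := by
    have h1 : orderOf hu.unit = n := by rw [← orderOf_units, hu.unit_spec, hord]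
    exact h1 ▸ orderOf_dvd_card
  have hcardKu : Fintype.card Kˣ = Fintype.card F ^ f.natDegree - 1 := by
    rw [Fintype.card_units, cardK]
  have hone_le : 1 ≤ Fintype.card F ^ f.natDegree := Nat.one_le_pow _ _ (by omega)
  have hmod : Fintype.card F ^ f.natDegree ≡ 1 [MOD n] := by
    refine ((Nat.modEq_iff_dvd' hone_le).mpr ?_).symm
    rw [← hcardKu]; exact hdvdcard
  have hle1 : d ≤ f.natDegree := hmin _ hf.natDegree_pos hmod
  -- upper bound
  obtain ⟨r, -, hcardF⟩ := FiniteField.card F p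
  have hpq : p ^ ((r : ℕ) * d) = Fintype.card F ^ d := by rw [pow_mul, ← hcardF]
  have hfix : ∀ x : K, x ^ Fintype.card F ^ d = x := by
    have hnt : n ∣ Fintype.card F ^ d - 1 :=
      (Nat.modEq_iff_dvd' (Nat.one_le_pow _ _ (by omega))).mp hdq.symm
    obtain ⟨t, ht⟩ := hnt
    have hqd1 : 1 ≤ Fintype.card F ^ d := Nat.one_le_pow _ _ (by omega)
    have hqd : Fintype.card F ^ d = n * t + 1 := by omega
    let ψ : K →ₐ[F] K :=
      { toRingHom := iterateFrobenius K p ((r : ℕ) * d)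
        commutes' := fun c => by
          show iterateFrobenius K p ((r : ℕ) * d) ((algebraMap F K) c) = (algebraMap F K) c
          rw [iterateFrobenius_def, ← map_pow, hpq, FiniteField.pow_card_pow] }
    have hψroot : ψ α = α := by
      show iterateFrobenius K p ((r : ℕ) * d) α = α
      rw [iterateFrobenius_def, hpq, hqd, pow_add, pow_mul, hαn, one_pow, one_mul, pow_one]
    have hψ : ψ = AlgHom.id F K := AdjoinRoot.algHom_ext hψroot
    intro x
    have hx := DFunLike.congr_fun hψ x
    simpa [ψ, iterateFrobenius_def, hpq] using hx
  have hle2 : f.natDegree ≤ d := by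
    have hd0 : d ≠ 0 := hd.ne'
    have hpoly : (X ^ Fintype.card F ^ d - X : K[X]) ≠ 0 :=
      FiniteField.X_pow_card_pow_sub_X_ne_zero K hd0 hq1
    have hsub : (Finset.univ : Finset K) ⊆ (X ^ Fintype.card F ^ d - X : K[X]).roots.toFinset := by
      intro x _
      rw [Multiset.mem_toFinset, mem_roots hpoly]
      simp [hfix x]
    have h1 := Finset.card_le_card hsub
    rw [Finset.card_univ, cardK] at h1
    have h2 := (Multiset.toFinset_card_le _).trans
      ((X ^ Fintype.card F ^ d - X : K[X]).card_roots'.trans_eq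
        (FiniteField.X_pow_card_pow_sub_X_natDegree_eq K hd0 hq1))
    exact (Nat.pow_le_pow_iff_right hq1).mp (h1.trans h2)
  omega

/-- Cardinality of the unit group of the quotient by an irreducible polynomial. -/
lemma units_card_quot {F : Type*} [Field F] [Fintype F] {f : F[X]} (hf : Irreducible f) :
    Nat.card (F[X] ⧸ Ideal.span {f})ˣ = Fintype.card F ^ f.natDegree - 1 := by
  classical
  haveI := Fact.mk hf
  haveI : Fintype (AdjoinRoot f) :=
    Module.fintypeOfFintype (AdjoinRoot.powerBasis hf.ne_zero).basis
  have h1 : Fintype.card (AdjoinRoot f) = Fintype.card F ^ f.natDegree := by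
    rw [Module.card_fintype (AdjoinRoot.powerBasis hf.ne_zero).basis, Fintype.card_fin]
    rfl
  show Nat.card (AdjoinRoot f)ˣ = Fintype.card F ^ f.natDegree - 1
  rw [Nat.card_eq_fintype_card, Fintype.card_units, h1]

/-- For a prime `n ≠ p` and `d` the multiplicative order of `q` modulo `n`, the number of
polynomials of degree `< n` with unit image in `F_q[X]/(Q_n)` equals
`q * (q^d - 1)^((n-1)/d)`; equivalently, their quota among all `q^n` polynomials of degree
`< n` equals `(1 - q^(-d))^((n-1)/d)`. -/
theorem stmt4 {F : Type*} [Field F] [Fintype F] (p n d : ℕ) [Fact p.Prime] [CharP F p]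
    (hn : n.Prime) (hnp : n ≠ p)
    (hd : 0 < d) (hdq : Fintype.card F ^ d ≡ 1 [MOD n])
    (hmin : ∀ e : ℕ, 0 < e → Fintype.card F ^ e ≡ 1 [MOD n] → d ≤ e) :
    Nat.card {g : F[X] // g.degree < (n : WithBot ℕ) ∧
        IsUnit (Ideal.Quotient.mk
          (Ideal.span {(∑ i ∈ Finset.range n, X ^ i : F[X])}) g)} =
      Fintype.card F * (Fintype.card F ^ d - 1) ^ ((n - 1) / d) ∧
    (Nat.card {g : F[X] // g.degree < (n : WithBot ℕ) ∧
        IsUnit (Ideal.Quotient.mk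
          (Ideal.span {(∑ i ∈ Finset.range n, X ^ i : F[X])}) g)} : ℝ) /
        (Fintype.card F : ℝ) ^ n =
      (1 - ((Fintype.card F : ℝ))⁻¹ ^ d) ^ ((n - 1) / d) := by
  classical
  haveI : Fact n.Prime := ⟨hn⟩
  have hq1 : 1 < Fintype.card F := Fintype.one_lt_card
  set q := Fintype.card F with hqdef
  set Q : F[X] := ∑ i ∈ Finset.range n, X ^ i with hQdef
  have hQcyc : Q = Polynomial.cyclotomic n F := (Polynomial.cyclotomic_prime F n).symm
  have hQmonic : Q.Monic := by rw [hQcyc]; exact Polynomial.cyclotomic.monic n F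
  have hQ0 : Q ≠ 0 := hQmonic.ne_zero
  have hQdeg : Q.natDegree = n - 1 := by
    rw [hQcyc, Polynomial.natDegree_cyclotomic, Nat.totient_prime hn]
  have hpn : ¬ p ∣ n := fun h => hnp ((Nat.prime_dvd_prime_iff_eq Fact.out hn).mp h).symm
  have hnF : (n : F) ≠ 0 := by
    rw [Ne, CharP.cast_eq_zero_iff F p]; exact hpn
  have hQdvdX : Q ∣ X ^ n - 1 := ⟨X - 1, (geom_sum_mul X n).symm⟩
  have hsf : Squarefree Q :=
    (Polynomial.X_pow_sub_one_separable_iff.mpr hnF).squarefree.squarefree_of_dvd hQdvdX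
  -- factorization
  set M := UniqueFactorizationMonoid.normalizedFactors Q with hM
  have hMnodup : M.Nodup :=
    (UniqueFactorizationMonoid.squarefree_iff_nodup_normalizedFactors hQ0).mp hsf
  have hMmonic : ∀ g ∈ M, g.Monic := by
    intro g hg
    have h0 : g ≠ 0 := (UniqueFactorizationMonoid.irreducible_of_normalized_factor g hg).ne_zero
    rw [← UniqueFactorizationMonoid.normalize_normalized_factor g hg]
    exact Polynomial.monic_normalize h0
  have hMprod : M.prod = Q := by
    refine Polynomial.eq_of_monic_of_associated ?_ hQmonic
      (UniqueFactorizationMonoid.prod_normalizedFactors hQ0)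
    have := Polynomial.monic_multiset_prod_of_monic M id (fun g hg => hMmonic g hg)
    simpa using this
  set L := M.toList with hL
  have hLnodup : L.Nodup := by
    rw [hL, ← Multiset.coe_nodup, Multiset.coe_toList]; exact hMnodup
  set k := L.length with hk
  set fI : Fin k → F[X] := fun i => L.get i with hfI
  have hmem : ∀ i : Fin k, fI i ∈ M := fun i => by
    rw [← Multiset.mem_toList]; exact List.get_mem L i
  have hirr : ∀ i, Irreducible (fI i) := fun i =>
    UniqueFactorizationMonoid.irreducible_of_normalized_factor _ (hmem i)
  have hdegI : ∀ i, (fI i).natDegree = d := fun i =>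
    factor_natDegree p n d hn hnp hd hdq hmin (hirr i)
      ((Multiset.dvd_prod (hmem i)).trans (hMprod ▸ dvd_rfl))
  have hinj : Function.Injective fI := List.nodup_iff_injective_get.mp hLnodup
  have hcop : ∀ i j, i ≠ j → IsCoprime (fI i) (fI j) := by
    intro i j hij
    rw [(hirr i).coprime_iff_not_dvd]
    intro hdvd'
    have hassoc := (hirr i).associated_of_dvd (hirr j) hdvd'
    have heq : fI i = fI j :=
      Polynomial.eq_of_monic_of_associated (hMmonic _ (hmem i)) (hMmonic _ (hmem j)) hassoc
    exact hij (hinj heq)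
  have hprodQ : ∏ i : Fin k, fI i = Q := by
    have h1 := Fin.prod_univ_getElem L
    have h2 : M.toList.prod = M.prod := Multiset.prod_toList M
    rw [← hMprod, ← h2]
    exact h1
  have hinf : (⨅ i : Fin k, Ideal.span {fI i}) = Ideal.span {Q} := by
    rw [Ideal.iInf_span_singleton hcop, hprodQ]
  have hcopI : Pairwise (Function.onFun IsCoprime fun i : Fin k => Ideal.span {fI i}) := fun i j hij =>
    (Ideal.isCoprime_span_singleton_iff _ _).mpr (hcop i j hij)
  let ψ : (F[X] ⧸ Ideal.span {Q}) ≃+* ∀ i : Fin k, F[X] ⧸ Ideal.span {fI i} :=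
    (Ideal.quotEquivOfEq hinf.symm).trans
      (Ideal.quotientInfRingEquivPiQuotient _ hcopI)
  have hcardU : Nat.card (F[X] ⧸ Ideal.span {Q})ˣ = (q ^ d - 1) ^ k := by
    have e1 : (F[X] ⧸ Ideal.span {Q})ˣ ≃ ∀ i : Fin k, (F[X] ⧸ Ideal.span {fI i})ˣ :=
      (Units.mapEquiv ψ.toMulEquiv).toEquiv.trans myPiUnits.toEquiv
    rw [Nat.card_congr e1, Nat.card_pi]
    have hcc : ∀ i : Fin k, Nat.card (F[X] ⧸ Ideal.span {fI i})ˣ = q ^ d - 1 := fun i => by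
      rw [units_card_quot (hirr i), hdegI i]
    rw [Finset.prod_congr rfl (fun i _ => hcc i), Finset.prod_const, Finset.card_univ,
      Fintype.card_fin]
  have hkd : k * d = n - 1 := by
    have h1 : Q.natDegree = ∑ i : Fin k, (fI i).natDegree := by
      rw [← hprodQ, Polynomial.natDegree_prod _ _ (fun i _ => (hirr i).ne_zero)]
    rw [hQdeg] at h1
    simp only [hdegI, Finset.sum_const, Finset.card_univ, Fintype.card_fin,
      smul_eq_mul] at h1
    omega
  have hkdiv : (n - 1) / d = k := by rw [← hkd, Nat.mul_div_cancel _ hd]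
  have hQdegree : Q.degree = ((n - 1 : ℕ) : WithBot ℕ) := by
    rw [Polynomial.degree_eq_natDegree hQ0, hQdeg]
  -- counting polynomials of degree < n
  have hcount : Nat.card {g : F[X] // g.degree < (n : WithBot ℕ) ∧
      IsUnit (Ideal.Quotient.mk (Ideal.span {Q}) g)} =
      q * Nat.card (F[X] ⧸ Ideal.span {Q})ˣ := by
    have hbij : Function.Bijective (fun g : {g : F[X] // g.degree < (n : WithBot ℕ) ∧
        IsUnit (Ideal.Quotient.mk (Ideal.span {Q}) g)} =>
        ((g.1.coeff (n-1), g.2.2.unit) : F × (F[X] ⧸ Ideal.span {Q})ˣ)) := by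
      constructor
      · rintro ⟨g₁, hg₁⟩ ⟨g₂, hg₂⟩ h
        simp only [Prod.mk.injEq] at h
        obtain ⟨hc, hu⟩ := h
        have hmk : Ideal.Quotient.mk (Ideal.span {Q}) g₁ =
            Ideal.Quotient.mk (Ideal.span {Q}) g₂ := by
          rw [← hg₁.2.unit_spec, ← hg₂.2.unit_spec, hu]
        have hQdvd2 : Q ∣ g₁ - g₂ := by
          rw [← Ideal.mem_span_singleton]
          exact (Ideal.Quotient.eq).mp hmk
        have hdeglt : (g₁ - g₂).degree < ((n - 1 : ℕ) : WithBot ℕ) := by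
          rw [Polynomial.degree_lt_iff_coeff_zero]
          intro m hm
          rcases eq_or_lt_of_le hm with heq | hlt
          · rw [Polynomial.coeff_sub, ← heq, hc, sub_self]
          · have hnm : n ≤ m := by omega
            have hnm' : (n : WithBot ℕ) ≤ (m : WithBot ℕ) := by exact_mod_cast hnm
            rw [Polynomial.coeff_sub,
              Polynomial.coeff_eq_zero_of_degree_lt (lt_of_lt_of_le hg₁.1 hnm'),
              Polynomial.coeff_eq_zero_of_degree_lt (lt_of_lt_of_le hg₂.1 hnm'),
              sub_self]
        have hzero : g₁ - g₂ = 0 :=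
          Polynomial.eq_zero_of_dvd_of_degree_lt hQdvd2 (by rw [hQdegree]; exact hdeglt)
        exact Subtype.ext (sub_eq_zero.mp hzero)
      · rintro ⟨c, u⟩
        obtain ⟨g₀, hg₀⟩ := Ideal.Quotient.mk_surjective (u : F[X] ⧸ Ideal.span {Q})
        have hrdeg : (g₀ %ₘ Q).degree < Q.degree := Polynomial.degree_modByMonic_lt g₀ hQmonic
        have hmkr : Ideal.Quotient.mk (Ideal.span {Q}) (g₀ %ₘ Q) = ↑u := by
          rw [← hg₀, Ideal.Quotient.eq]
          have h2 := Polynomial.modByMonic_add_div g₀ Q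
          have hsub : g₀ %ₘ Q - g₀ = -(Q * (g₀ /ₘ Q)) := by linear_combination h2
          rw [hsub]
          exact neg_mem (Ideal.mem_span_singleton.mpr ⟨_, rfl⟩)
        set g : F[X] := g₀ %ₘ Q + C c * Q with hgdef
        have hmkg : Ideal.Quotient.mk (Ideal.span {Q}) g = ↑u := by
          rw [hgdef, map_add, map_mul, Ideal.Quotient.eq_zero_iff_mem.mpr
            (Ideal.mem_span_singleton_self Q), mul_zero, add_zero, hmkr]
        have hrdeg' : (g₀ %ₘ Q).degree < ((n-1:ℕ) : WithBot ℕ) := hQdegree ▸ hrdeg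
        have hn1 : ((n-1:ℕ) : WithBot ℕ) < (n : WithBot ℕ) := by
          exact_mod_cast Nat.sub_lt hn.pos one_pos
        have hdegg : g.degree < (n : WithBot ℕ) := by
          apply lt_of_le_of_lt (Polynomial.degree_add_le _ _)
          apply max_lt (hrdeg'.trans hn1)
          apply lt_of_le_of_lt (Polynomial.degree_mul_le _ _)
          calc (C c).degree + Q.degree ≤ 0 + ((n-1:ℕ):WithBot ℕ) :=
                add_le_add Polynomial.degree_C_le hQdegree.le
            _ = ((n-1:ℕ):WithBot ℕ) := zero_add _
            _ < _ := hn1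
        have hcoeff : g.coeff (n-1) = c := by
          rw [hgdef, Polynomial.coeff_add, Polynomial.coeff_C_mul,
            Polynomial.coeff_eq_zero_of_degree_lt hrdeg',
            show Q.coeff (n-1) = 1 from by rw [← hQdeg]; exact hQmonic.coeff_natDegree,
            zero_add, mul_one]
        have hunit : IsUnit (Ideal.Quotient.mk (Ideal.span {Q}) g) := hmkg ▸ u.isUnit
        refine ⟨⟨g, hdegg, hunit⟩, ?_⟩
        exact Prod.ext hcoeff (Units.ext (hunit.unit_spec.trans hmkg))
    rw [Nat.card_eq_of_bijective _ hbij, Nat.card_prod, Nat.card_eq_fintype_card (α := F)]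
  have hfirst : Nat.card {g : F[X] // g.degree < (n : WithBot ℕ) ∧
      IsUnit (Ideal.Quotient.mk (Ideal.span {Q}) g)} = q * (q ^ d - 1) ^ ((n - 1) / d) := by
    rw [hcount, hcardU, hkdiv]
  refine ⟨hfirst, ?_⟩
  rw [hfirst, hkdiv]
  have hq0 : (0:ℝ) < (q : ℝ) := by
    have : 0 < q := Nat.lt_trans Nat.zero_lt_one hq1
    exact_mod_cast this
  have hone : 1 ≤ q ^ d := Nat.one_le_pow _ _ (Nat.lt_trans Nat.zero_lt_one hq1)
  have hcast : ((q * (q ^ d - 1) ^ k : ℕ) : ℝ) = (q : ℝ) * ((q:ℝ)^d - 1)^k := by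
    push_cast [Nat.cast_sub hone]
    ring
  rw [hcast]
  have hnn : n = k * d + 1 := by rw [hkd]; exact (Nat.succ_pred_eq_of_pos hn.pos).symm
  have hpowsplit : (q:ℝ) ^ n = ((q:ℝ)^d)^k * (q:ℝ) := by
    rw [hnn, pow_succ, mul_comm k d, pow_mul]
  rw [hpowsplit]
  have h2 : (1 - ((q:ℝ))⁻¹ ^ d) = ((q:ℝ)^d - 1) / (q:ℝ)^d := by
    rw [inv_pow]
    field_simp
  rw [h2, div_pow, div_eq_div_iff (by positivity) (by positivity)]
  ring
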